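/- Normalization theorem for Call-by-Name: the unbiased strategy ⊳ is a normalizing strategy for →β. That is: (a) a term is ⊳-normal if and only if it is β-normal; and (b) if M →β* N for some β-normal N, then every maximal ⊳-sequence from M is finite and ends in a β-normal form (indeed, by Random Descent, it ends in N). -/

import Mathlib

/-- Untyped λ-terms in de Bruijn representation. -/
inductive Tm : Type
  | var : ℕ → Tm
  | lam : Tm → Tm
  | app : Tm → Tm → Tm
deriving DecidableEq

namespace Tm

/-- Lift (shift by one) the free variables of index `≥ d`. -/
def lift (d : ℕ) : Tm → Tm
  | var n => if n < d then var n else var (n + 1)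
  | lam M => lam (lift (d + 1) M)
  | app M N => app (lift d M) (lift d N)

/-- Capture-avoiding substitution `M[N/k]` of `N` for the free variable `k` in `M`. -/
def subst : Tm → ℕ → Tm → Tm
  | var n, k, N => if n = k then N else if k < n then var (n - 1) else var n
  | lam M, k, N => lam (subst M (k + 1) (lift 0 N))
  | app M₁ M₂, k, N => app (subst M₁ k N) (subst M₂ k N)

end Tm

/-- β-reduction: the closure of the root rule `(λx.M)N ↦β M[N/x]` under arbitrary contexts. -/
inductive Beta : Tm → Tm → Prop
  | beta (M N : Tm) : Beta (Tm.app (Tm.lam M) N) (M.subst 0 N)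
  | lam {M M'} : Beta M M' → Beta (Tm.lam M) (Tm.lam M')
  | appL {M M' N} : Beta M M' → Beta (Tm.app M N) (Tm.app M' N)
  | appR {M N N'} : Beta N N' → Beta (Tm.app M N) (Tm.app M N')

/-- Head reduction: the closure of `↦β` under head contexts `H ::= ⟨⟩ | λx.H | H M`. -/
inductive Head : Tm → Tm → Prop
  | beta (M N : Tm) : Head (Tm.app (Tm.lam M) N) (M.subst 0 N)
  | lam {M M'} : Head M M' → Head (Tm.lam M) (Tm.lam M')
  | appL {M M' N} : Head M M' → Head (Tm.app M N) (Tm.app M' N)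

/-- The unbiased strategy `⊳`: perform head steps as long as possible; once the term has
no head redex, iterate in the subterms (in arbitrary order). -/
inductive Unb : Tm → Tm → Prop
  | head {M M'} : Head M M' → Unb M M'
  | lam {P P'} : (∀ s, ¬ Head (Tm.lam P) s) → Unb P P' → Unb (Tm.lam P) (Tm.lam P')
  | appL {P P' Q} : (∀ s, ¬ Head (Tm.app P Q) s) → Unb P P' →
      Unb (Tm.app P Q) (Tm.app P' Q)
  | appR {P Q Q'} : (∀ s, ¬ Head (Tm.app P Q) s) → Unb Q Q' →
      Unb (Tm.app P Q) (Tm.app P Q')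

/-- `M` is `r`-normal: it has no `r`-successor. -/
def NormalElt (r : Tm → Tm → Prop) (M : Tm) : Prop := ∀ N, ¬ r M N

/-- A maximal `r`-sequence from `M`, encoded as a stream that stabilizes on a normal
form in the finite case. -/
def MaxSeq (r : Tm → Tm → Prop) (M : Tm) (f : ℕ → Tm) : Prop :=
  f 0 = M ∧ ∀ n, r (f n) (f (n + 1)) ∨ (NormalElt r (f n) ∧ f (n + 1) = f n)

namespace Tm

theorem lift_lift (M : Tm) : ∀ d e, d ≤ e →
    lift (e+1) (lift d M) = lift d (lift e M) := by
  induction M with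
  | var n => intro d e h; simp only [lift]; split_ifs <;> simp only [lift] <;>
      split_ifs <;> first | rfl | omega
  | lam M ih => intro d e h; simp only [lift, ih (d+1) (e+1) (by omega)]
  | app M N ihM ihN => intro d e h; simp only [lift, ihM d e h, ihN d e h]

theorem lift_subst (M : Tm) : ∀ N d k, d ≤ k →
    lift d (M.subst k N) = (lift d M).subst (k+1) (lift d N) := by
  induction M with
  | var n =>
    intro N d k h; simp only [subst, lift]
    split_ifs <;> simp only [subst, lift] <;> split_ifs <;>
      first | rfl | omega | (congr 1; omega)
  | lam M ih =>
    intro N d k h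
    simp only [subst, lift, ih (lift 0 N) (d+1) (k+1) (by omega),
      lift_lift N 0 d (by omega)]
  | app A B ihA ihB =>
    intro N d k h; simp only [subst, lift, ihA N d k h, ihB N d k h]

theorem lift_subst' (M : Tm) : ∀ N d j, j ≤ d →
    lift d (M.subst j N) = (lift (d+1) M).subst j (lift d N) := by
  induction M with
  | var n =>
    intro N d j h; simp only [subst, lift]
    split_ifs <;> simp only [subst, lift] <;> split_ifs <;>
      first | rfl | omega | (congr 1; omega)
  | lam M ih =>
    intro N d j h
    simp only [subst, lift, ih (lift 0 N) (d+1) (j+1) (by omega),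
      lift_lift N 0 d (by omega)]
  | app A B ihA ihB =>
    intro N d j h; simp only [subst, lift, ihA N d j h, ihB N d j h]

theorem subst_lift (N : Tm) : ∀ j P, (lift j N).subst j P = N := by
  induction N with
  | var n => intro j P; simp only [lift]; split_ifs <;> simp only [subst] <;>
      split_ifs <;> first | rfl | omega | (congr 1; omega)
  | lam M ih => intro j P; simp only [lift, subst, ih (j+1) (lift 0 P)]
  | app A B ihA ihB => intro j P; simp only [lift, subst, ihA, ihB]

theorem subst_subst (A : Tm) : ∀ B N j k, j ≤ k →
    (A.subst j B).subst k N = (A.subst (k+1) (lift j N)).subst j (B.subst k N) := by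
  induction A with
  | var n =>
    intro B N j k h
    simp only [subst]
    split_ifs <;> (try simp only [subst]) <;> (try split_ifs) <;>
      first
      | rfl | omega | (congr 1; omega) | (exfalso; omega)
      | (rw [subst_lift])
  | lam A ih =>
    intro B N j k h
    simp only [subst]
    rw [ih (lift 0 B) (lift 0 N) (j+1) (k+1) (by omega),
      lift_lift N 0 j (by omega), lift_subst B N 0 k (by omega)]
  | app P Q ihP ihQ =>
    intro B N j k h
    simp only [subst, ihP B N j k h, ihQ B N j k h]

end Tm

open Tm

def IsLam : Tm → Prop := fun M => ∃ P, M = Tm.lam P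

theorem head_subst {M M'} (h : Head M M') (k : ℕ) (N : Tm) :
    Head (M.subst k N) (M'.subst k N) := by
  induction h generalizing k N with
  | beta A B =>
    have : (A.subst 0 B).subst k N
        = (A.subst (k+1) (lift 0 N)).subst 0 (B.subst k N) :=
      Tm.subst_subst A B N 0 k (by omega)
    rw [this]; exact Head.beta _ _
  | lam _ ih => exact Head.lam (ih (k+1) (lift 0 N))
  | appL _ ih => exact Head.appL (ih k N)

theorem head_beta {M M'} (h : Head M M') : Beta M M' := by
  induction h with
  | beta A B => exact Beta.beta A B
  | lam _ ih => exact Beta.lam ih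
  | appL _ ih => exact Beta.appL ih

theorem unb_beta {M M'} (h : Unb M M') : Beta M M' := by
  induction h with
  | head h => exact head_beta h
  | lam _ _ ih => exact Beta.lam ih
  | appL _ _ ih => exact Beta.appL ih
  | appR _ _ ih => exact Beta.appR ih

theorem nohead_app_inv {A B : Tm} (h : ∀ s, ¬ Head (Tm.app A B) s) :
    (∀ s, ¬ Head A s) ∧ ¬ IsLam A := by
  constructor
  · intro s hs; exact h (Tm.app s B) (Head.appL hs)
  · rintro ⟨C, rfl⟩; exact h _ (Head.beta C B)

theorem nohead_app_intro {A : Tm} (h1 : ∀ s, ¬ Head A s) (h2 : ¬ IsLam A) (B : Tm) :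
    ∀ s, ¬ Head (Tm.app A B) s := by
  intro s hs
  cases hs with
  | beta M N => exact h2 ⟨M, rfl⟩
  | appL h => exact h1 _ h

theorem nohead_lam_intro {A : Tm} (h1 : ∀ s, ¬ Head A s) :
    ∀ s, ¬ Head (Tm.lam A) s := by
  intro s hs; cases hs with | lam h => exact h1 _ h

/-- Every non-head Unb step carries "source has no head redex". -/
theorem unb_cases {P Q} (u : Unb P Q) : Head P Q ∨ (∀ s, ¬ Head P s) := by
  cases u with
  | head h => exact Or.inl h
  | lam hn _ => exact Or.inr hn
  | appL hn _ => exact Or.inr hn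
  | appR hn _ => exact Or.inr hn

theorem unb_lam {P Q} (u : Unb P Q) : Unb (Tm.lam P) (Tm.lam Q) := by
  rcases unb_cases u with h | hn
  · exact Unb.head (Head.lam h)
  · exact Unb.lam (nohead_lam_intro hn) u

theorem unb_appL {P Q} (u : Unb P Q) (hP : ¬ IsLam P) (R : Tm) :
    Unb (Tm.app P R) (Tm.app Q R) := by
  rcases unb_cases u with h | hn
  · exact Unb.head (Head.appL h)
  · exact Unb.appL (nohead_app_intro hn hP R) u

theorem unb_nohead {P P'} (u : Unb P P') (h1 : ∀ s, ¬ Head P s) (h2 : ¬ IsLam P) :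
    (∀ s, ¬ Head P' s) ∧ ¬ IsLam P' := by
  induction u with
  | head h => exact absurd h (h1 _)
  | lam _ _ _ => exact absurd ⟨_, rfl⟩ h2
  | appL hn u ih =>
    obtain ⟨hA, hAl⟩ := nohead_app_inv hn
    obtain ⟨hA', hAl'⟩ := ih hA hAl
    exact ⟨nohead_app_intro hA' hAl' _, fun ⟨C, hC⟩ => by cases hC⟩
  | appR hn u _ =>
    obtain ⟨hA, hAl⟩ := nohead_app_inv hn
    exact ⟨nohead_app_intro hA hAl _, fun ⟨C, hC⟩ => by cases hC⟩

theorem head_diamond {M M1 M2} (h1 : Head M M1) (h2 : Head M M2) :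
    M1 = M2 ∨ ∃ M3, Head M1 M3 ∧ Head M2 M3 := by
  induction h1 generalizing M2 with
  | beta A B =>
    cases h2 with
    | beta => exact Or.inl rfl
    | appL h =>
      cases h with
      | lam h' =>
        exact Or.inr ⟨_, head_subst h' 0 B, Head.beta _ B⟩
  | lam h ih =>
    cases h2 with
    | lam h2' =>
      rcases ih h2' with rfl | ⟨M3, ha, hb⟩
      · exact Or.inl rfl
      · exact Or.inr ⟨_, Head.lam ha, Head.lam hb⟩
  | appL h ih =>
    rename_i P P₁ B
    cases h2 with
    | beta _ _ =>
      cases h with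
      | lam h' =>
        exact Or.inr ⟨_, Head.beta _ B, head_subst h' 0 B⟩
    | appL h2' =>
      rcases ih h2' with rfl | ⟨M3, ha, hb⟩
      · exact Or.inl rfl
      · exact Or.inr ⟨_, Head.appL ha, Head.appL hb⟩

theorem unb_diamond {M M1 M2} (u1 : Unb M M1) (u2 : Unb M M2) :
    M1 = M2 ∨ ∃ M3, Unb M1 M3 ∧ Unb M2 M3 := by
  induction u1 generalizing M2 with
  | head h1 =>
    cases u2 with
    | head h2 =>
      rcases head_diamond h1 h2 with rfl | ⟨M3, ha, hb⟩
      · exact Or.inl rfl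
      · exact Or.inr ⟨M3, Unb.head ha, Unb.head hb⟩
    | lam hn _ => exact absurd h1 (hn _)
    | appL hn _ => exact absurd h1 (hn _)
    | appR hn _ => exact absurd h1 (hn _)
  | lam hn u ih =>
    cases u2 with
    | head h2 => exact absurd h2 (hn _)
    | lam _ u2' =>
      rcases ih u2' with rfl | ⟨M3, ha, hb⟩
      · exact Or.inl rfl
      · exact Or.inr ⟨_, unb_lam ha, unb_lam hb⟩
  | appL hn u ih =>
    rename_i P P' Q
    obtain ⟨hP, hPl⟩ := nohead_app_inv hn
    obtain ⟨hP', hPl'⟩ := unb_nohead u hP hPl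
    cases u2 with
    | head h2 => exact absurd h2 (hn _)
    | appL _ u2' =>
      rcases ih u2' with rfl | ⟨M3, ha, hb⟩
      · exact Or.inl rfl
      · obtain ⟨hP2, hPl2⟩ := unb_nohead u2' hP hPl
        exact Or.inr ⟨_, Unb.appL (nohead_app_intro hP' hPl' Q) ha,
          Unb.appL (nohead_app_intro hP2 hPl2 Q) hb⟩
    | appR _ u2' =>
      exact Or.inr ⟨_, Unb.appR (nohead_app_intro hP' hPl' Q) u2',
        Unb.appL (nohead_app_intro hP hPl _) u⟩
  | appR hn u ih =>
    rename_i P Q Q'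
    obtain ⟨hP, hPl⟩ := nohead_app_inv hn
    cases u2 with
    | head h2 => exact absurd h2 (hn _)
    | appL _ u2' =>
      obtain ⟨hP2, hPl2⟩ := unb_nohead u2' hP hPl
      exact Or.inr ⟨_, Unb.appL (nohead_app_intro hP hPl _) u2',
        Unb.appR (nohead_app_intro hP2 hPl2 Q) u⟩
    | appR _ u2' =>
      rcases ih u2' with rfl | ⟨M3, ha, hb⟩
      · exact Or.inl rfl
      · exact Or.inr ⟨_, Unb.appR (nohead_app_intro hP hPl _) ha,
          Unb.appR (nohead_app_intro hP hPl _) hb⟩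

open Relation

theorem unb_normal_iff (M : Tm) : NormalElt Unb M ↔ NormalElt Beta M := by
  constructor
  · intro h
    induction M with
    | var n => intro N hN; cases hN
    | lam P ih =>
      have hP : NormalElt Unb P := fun Q hQ => h _ (unb_lam hQ)
      intro N hN
      cases hN with | lam hb => exact (ih hP) _ hb
    | app P Q ihP ihQ =>
      have hnh : ∀ s, ¬ Head (Tm.app P Q) s := fun s hs => h s (Unb.head hs)
      obtain ⟨hP, hPl⟩ := nohead_app_inv hnh
      have hPn : NormalElt Unb P := fun X hX => h _ (unb_appL hX hPl Q)
      have hQn : NormalElt Unb Q := fun X hX => h _ (Unb.appR hnh hX)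
      intro N hN
      cases hN with
      | beta A B => exact hPl ⟨A, rfl⟩
      | appL hb => exact (ihP hPn) _ hb
      | appR hb => exact (ihQ hQn) _ hb
  · intro h N hN; exact h N (unb_beta hN)

theorem lam_stays {A T : Tm} (h : ReflTransGen Unb (Tm.lam A) T) : IsLam T := by
  induction h with
  | refl => exact ⟨A, rfl⟩
  | tail _ step ih =>
    obtain ⟨B, rfl⟩ := ih
    cases step with
    | head h => cases h with | lam h' => exact ⟨_, rfl⟩
    | lam _ _ => exact ⟨_, rfl⟩

theorem path_lam {P P' : Tm} (h : ReflTransGen Unb P P') :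
    ReflTransGen Unb (Tm.lam P) (Tm.lam P') :=
  ReflTransGen.lift Tm.lam (fun _ _ u => unb_lam u) _ _ h

theorem path_appL {P P' : Tm} (h : ReflTransGen Unb P P') (hl : ¬ IsLam P') (R : Tm) :
    ReflTransGen Unb (Tm.app P R) (Tm.app P' R) := by
  induction h using ReflTransGen.head_induction_on with
  | refl => exact ReflTransGen.refl
  | head step rest ih =>
    rename_i X Y
    have hX : ¬ IsLam X := by
      rintro ⟨A, rfl⟩
      exact hl (lam_stays (ReflTransGen.head step rest))
    exact ReflTransGen.head (unb_appL step hX R) ih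

theorem path_appR {P' Q Q' : Tm} (hP : ∀ s, ¬ Head P' s) (hPl : ¬ IsLam P')
    (h : ReflTransGen Unb Q Q') :
    ReflTransGen Unb (Tm.app P' Q) (Tm.app P' Q') :=
  ReflTransGen.lift (Tm.app P') (fun _ _ u => Unb.appR (nohead_app_intro hP hPl _) u) _ _ h

/-- n-step Unb paths. -/
inductive UPath : ℕ → Tm → Tm → Prop
  | refl (M : Tm) : UPath 0 M M
  | step {M M₁ N n} : Unb M M₁ → UPath n M₁ N → UPath (n+1) M N

theorem rt_to_upath {M N : Tm} (h : ReflTransGen Unb M N) : ∃ n, UPath n M N := by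
  induction h using ReflTransGen.head_induction_on with
  | refl => exact ⟨0, UPath.refl N⟩
  | head step _ ih =>
    obtain ⟨n, p⟩ := ih
    exact ⟨n+1, UPath.step step p⟩

theorem rd_step {N : Tm} (hN : NormalElt Unb N) :
    ∀ n M M', UPath n M N → Unb M M' → ∃ m, m + 1 = n ∧ UPath m M' N := by
  intro n
  induction n with
  | zero =>
    intro M M' p u
    cases p
    exact absurd u (hN _)
  | succ n ih =>
    intro M M' p u
    cases p with
    | step u1 p1 =>
      rcases unb_diamond u u1 with rfl | ⟨M3, ha, hb⟩
      · exact ⟨n, rfl, p1⟩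
      · obtain ⟨m, hm, pm⟩ := ih _ _ p1 hb
        refine ⟨n, rfl, ?_⟩
        rw [← hm]
        exact UPath.step ha pm

theorem maxseq_shift {M : Tm} {f : ℕ → Tm} (h : MaxSeq Unb M f) :
    MaxSeq Unb (f 1) (fun k => f (k + 1)) :=
  ⟨rfl, fun n => h.2 (n + 1)⟩

theorem rd_main {N : Tm} (hN : NormalElt Unb N) :
    ∀ n M f, UPath n M N → MaxSeq Unb M f →
      ∃ m, NormalElt Unb (f m) ∧ f m = N := by
  intro n
  induction n with
  | zero =>
    intro M f p hf
    cases p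
    exact ⟨0, by rw [hf.1]; exact ⟨hN, rfl⟩⟩
  | succ n ih =>
    intro M f p hf
    cases p with
    | step u1 p1 =>
      rcases hf.2 0 with hstep | ⟨hnorm, _⟩
      · rw [hf.1] at hstep
        rcases unb_diamond u1 hstep with rfl | ⟨M3, ha, hb⟩
        · obtain ⟨m, hm1, hm2⟩ := ih _ _ p1 (maxseq_shift hf)
          exact ⟨m + 1, hm1, hm2⟩
        · obtain ⟨k, hk, pk⟩ := rd_step hN n _ _ p1 ha
          have pf1 : UPath n (f 1) N := by rw [← hk]; exact UPath.step hb pk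
          obtain ⟨m, hm1, hm2⟩ := ih _ _ pf1 (maxseq_shift hf)
          exact ⟨m + 1, hm1, hm2⟩
      · rw [hf.1] at hnorm
        exact absurd u1 (hnorm _)

-- Kashima's standardization machinery
open Relation

/-- Weak head reduction (no reduction under λ). -/
inductive Hap1 : Tm → Tm → Prop
  | beta (M N : Tm) : Hap1 (Tm.app (Tm.lam M) N) (M.subst 0 N)
  | app {M M' N} : Hap1 M M' → Hap1 (Tm.app M N) (Tm.app M' N)

abbrev Hap : Tm → Tm → Prop := ReflTransGen Hap1

/-- Standard reduction. -/
inductive St : Tm → Tm → Prop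
  | var {M n} : Hap M (Tm.var n) → St M (Tm.var n)
  | lam {M P P'} : Hap M (Tm.lam P) → St P P' → St M (Tm.lam P')
  | app {M P Q P' Q'} : Hap M (Tm.app P Q) → St P P' → St Q Q' →
      St M (Tm.app P' Q')

theorem hap1_head {M M'} (h : Hap1 M M') : Head M M' := by
  induction h with
  | beta A B => exact Head.beta A B
  | app _ ih => exact Head.appL ih

theorem hap1_subst {M M'} (h : Hap1 M M') (k : ℕ) (N : Tm) :
    Hap1 (M.subst k N) (M'.subst k N) := by
  induction h generalizing k N with
  | beta A B =>
    have : (A.subst 0 B).subst k N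
        = (A.subst (k+1) (Tm.lift 0 N)).subst 0 (B.subst k N) :=
      Tm.subst_subst A B N 0 k (by omega)
    rw [this]; exact Hap1.beta _ _
  | app _ ih => exact Hap1.app (ih k N)

theorem hap1_lift {M M'} (h : Hap1 M M') (d : ℕ) :
    Hap1 (Tm.lift d M) (Tm.lift d M') := by
  induction h generalizing d with
  | beta A B =>
    have : Tm.lift d (A.subst 0 B)
        = (Tm.lift (d+1) A).subst 0 (Tm.lift d B) :=
      Tm.lift_subst' A B d 0 (by omega)
    rw [this]; exact Hap1.beta _ _
  | app _ ih => exact Hap1.app (ih d)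

theorem hap_subst {M M'} (h : Hap M M') (k : ℕ) (N : Tm) :
    Hap (M.subst k N) (M'.subst k N) :=
  ReflTransGen.lift (fun X : Tm => X.subst k N) (fun _ _ u => hap1_subst u k N) _ _ h

theorem hap_lift {M M'} (h : Hap M M') (d : ℕ) :
    Hap (Tm.lift d M) (Tm.lift d M') :=
  ReflTransGen.lift (Tm.lift d) (fun _ _ u => hap1_lift u d) _ _ h

theorem hap_appL {M M'} (h : Hap M M') (Q : Tm) :
    Hap (Tm.app M Q) (Tm.app M' Q) :=
  ReflTransGen.lift (fun X => Tm.app X Q) (fun _ _ u => Hap1.app u) _ _ h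

theorem hap_st {M M' X} (h : Hap M M') (hst : St M' X) : St M X := by
  cases hst with
  | var h' => exact St.var (h.trans h')
  | lam h' hs => exact St.lam (h.trans h') hs
  | app h' hs1 hs2 => exact St.app (h.trans h') hs1 hs2

theorem st_refl (M : Tm) : St M M := by
  induction M with
  | var n => exact St.var ReflTransGen.refl
  | lam P ih => exact St.lam ReflTransGen.refl ih
  | app P Q ihP ihQ => exact St.app ReflTransGen.refl ihP ihQ

theorem st_lift {M M'} (h : St M M') (d : ℕ) :
    St (Tm.lift d M) (Tm.lift d M') := by
  induction h generalizing d with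
  | var hp =>
    rename_i M n
    have h2 := hap_lift hp d
    by_cases hc : n < d
    · rw [show Tm.lift d (Tm.var n) = Tm.var n from by simp [Tm.lift, hc]] at h2 ⊢
      exact St.var h2
    · rw [show Tm.lift d (Tm.var n) = Tm.var (n+1) from by simp [Tm.lift, hc]] at h2 ⊢
      exact St.var h2
  | lam hp _ ih =>
    exact St.lam (by simpa [Tm.lift] using hap_lift hp d) (ih (d+1))
  | app hp _ _ ih1 ih2 =>
    exact St.app (by simpa [Tm.lift] using hap_lift hp d) (ih1 d) (ih2 d)

theorem st_subst {M M'} (h : St M M') :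
    ∀ {N N'} (_ : St N N') (k : ℕ), St (M.subst k N) (M'.subst k N') := by
  induction h with
  | var hp =>
    rename_i M n
    intro N N' hN k
    refine hap_st (hap_subst hp k N) ?_
    simp only [Tm.subst]
    split_ifs with h1 h2
    · exact hN
    · exact st_refl _
    · exact st_refl _
  | lam hp _ ih =>
    intro N N' hN k
    refine hap_st (hap_subst hp k N) ?_
    simp only [Tm.subst]
    exact St.lam ReflTransGen.refl (ih (st_lift hN 0) (k+1))
  | app hp _ _ ih1 ih2 =>
    intro N N' hN k
    refine hap_st (hap_subst hp k N) ?_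
    simp only [Tm.subst]
    exact St.app ReflTransGen.refl (ih1 hN k) (ih2 hN k)

theorem st_beta {M M'} (h : St M M') : ∀ {N'}, Beta M' N' → St M N' := by
  induction h with
  | var _ => intro N' hb; cases hb
  | lam hp hs ih =>
    intro N' hb
    cases hb with
    | lam hb' => exact St.lam hp (ih hb')
  | app hp hs1 hs2 ih1 ih2 =>
    intro N' hb
    cases hb with
    | beta A B =>
      -- hs1 : St P (lam A); invert
      cases hs1 with
      | lam hpP hsA =>
        exact hap_st ((hp.trans (hap_appL hpP _)).trans
          (ReflTransGen.single (Hap1.beta _ _))) (st_subst hsA hs2 0)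
    | appL hb' => exact St.app hp (ih1 hb') hs2
    | appR hb' => exact St.app hp hs1 (ih2 hb')

theorem rt_beta_st {M N : Tm} (h : ReflTransGen Beta M N) : St M N := by
  induction h with
  | refl => exact st_refl M
  | tail _ step ih => exact st_beta ih step

theorem st_path {M N} (h : St M N) (hN : NormalElt Beta N) :
    ReflTransGen Unb M N := by
  induction h with
  | var hp => exact ReflTransGen.mono (fun _ _ u => Unb.head (hap1_head u)) _ _ hp
  | lam hp hs ih =>
    rename_i M P P'
    have hP' : NormalElt Beta P' := fun X hX => hN _ (Beta.lam hX)
    exact (ReflTransGen.mono (fun _ _ u => Unb.head (hap1_head u)) _ _ hp).trans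
      (path_lam (ih hP'))
  | app hp hs1 hs2 ih1 ih2 =>
    rename_i M P Q P' Q'
    have hP' : NormalElt Beta P' := fun X hX => hN _ (Beta.appL hX)
    have hQ' : NormalElt Beta Q' := fun X hX => hN _ (Beta.appR hX)
    have hPl : ¬ IsLam P' := by rintro ⟨A, rfl⟩; exact hN _ (Beta.beta A Q')
    have hPh : ∀ s, ¬ Head P' s := fun s hs => hP' s (head_beta hs)
    refine (ReflTransGen.mono (fun _ _ u => Unb.head (hap1_head u)) _ _ hp).trans ?_
    exact (path_appL (ih1 hP') hPl Q).trans (path_appR hPh hPl (ih2 hQ'))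

theorem cbn_part_b {M N : Tm} (hN : NormalElt Beta N)
    (hRT : ReflTransGen Beta M N) (f : ℕ → Tm) (hf : MaxSeq Unb M f) :
    ∃ n, NormalElt Unb (f n) ∧ f n = N := by
  have hNu : NormalElt Unb N := (unb_normal_iff N).mpr hN
  obtain ⟨n, p⟩ := rt_to_upath (st_path (rt_beta_st hRT) hN)
  exact rd_main hNu n M f p hf

/-- **Normalization theorem for Call-by-Name**: the unbiased strategy `⊳` is a
normalizing strategy for `→β`.
(a) a term is `⊳`-normal iff it is β-normal;
(b) if `M →β* N` with `N` β-normal, then every maximal `⊳`-sequence from `M` is finite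
    and ends in a β-normal form — indeed, by Random Descent, it ends in `N`. -/
theorem cbn_normalization :
    (∀ M : Tm, NormalElt Unb M ↔ NormalElt Beta M) ∧
    (∀ M N : Tm, NormalElt Beta N → Relation.ReflTransGen Beta M N →
      ∀ f : ℕ → Tm, MaxSeq Unb M f → ∃ n, NormalElt Unb (f n) ∧ f n = N) := by
  exact ⟨unb_normal_iff, fun M N hN hRT f hf => cbn_part_b hN hRT f hf⟩
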